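/- Let R be a commutative ℂ-algebra and let f₁, …, f_r ∈ R((t))^√. Then there exist natural numbers N and d such that every element g of the ℂ-subalgebra of R((t)) generated by f₁, …, f_r satisfies: the coefficient of tⁿ in g is 0 for every n < −N, and the coefficient of tⁿ in g raised to the power d equals 0 for every n < 0. In other words, every finitely generated ℂ-subalgebra of R((t))^√ has uniformly bounded pole order and uniformly bounded order of nilpotency of its negative coefficients. -/

import Mathlib

/-- Let `R` be a commutative ℂ-algebra and let `f₁, …, f_r ∈ R((t))^√`.
Then there exist natural numbers `N` and `d` such that every element `g` of the
ℂ-subalgebra of `R((t))` generated by `f₁, …, f_r` satisfies: the coefficient of `tⁿ`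
in `g` is `0` for every `n < −N`, and the `d`-th power of the coefficient of `tⁿ` in `g`
is `0` for every `n < 0`. -/
theorem adjoin_nilLaurent_uniform_bounds {R : Type*} [CommRing R] [Algebra ℂ R]
    {r : ℕ} (f : Fin r → LaurentSeries R)
    (hf : ∀ i : Fin r, ∀ n : ℤ, n < 0 → IsNilpotent ((f i).coeff n)) :
    ∃ N d : ℕ, ∀ g ∈ Algebra.adjoin ℂ (Set.range f),
      (∀ n : ℤ, n < -(N : ℤ) → g.coeff n = 0) ∧
      (∀ n : ℤ, n < 0 → g.coeff n ^ d = 0) := by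
  classical
  -- a uniform pole bound for the generators
  set N0 : ℕ := Finset.univ.sup (fun i : Fin r => (-(f i).order).toNat) with hN0def
  have horder : ∀ (i : Fin r) (n : ℤ), n < -(N0 : ℤ) → (f i).coeff n = 0 := by
    intro i n hn
    apply HahnSeries.coeff_eq_zero_of_lt_order
    have h1 : (-(f i).order).toNat ≤ N0 :=
      Finset.le_sup (f := fun i : Fin r => (-(f i).order).toNat) (Finset.mem_univ i)
    omega
  -- the "weight" function
  set N' : ℕ := N0 + 1 with hN'def
  set m : ℤ → ℕ := fun n => ((-n).toNat + N0) / N' with hmdef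
  have hmle : ∀ (n : ℤ) (k : ℕ), m n ≤ k ↔ (-n).toNat ≤ k * N' := by
    intro n k
    rw [hmdef]
    simp only []
    rw [Nat.div_le_iff_le_mul_add_pred (by omega : 0 < N')]
    have : N' * k = k * N' := Nat.mul_comm _ _
    omega
  have hmzero : ∀ n : ℤ, 0 ≤ n → m n = 0 := by
    intro n hn
    have := (hmle n 0).2 (by omega)
    omega
  have hsuper : ∀ a b : ℤ, m (a + b) ≤ m a + m b := by
    intro a b
    rw [hmle]
    have ha : (-a).toNat ≤ m a * N' := (hmle a (m a)).1 le_rfl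
    have hb : (-b).toNat ≤ m b * N' := (hmle b (m b)).1 le_rfl
    have hd : (m a + m b) * N' = m a * N' + m b * N' := Nat.add_mul _ _ _
    omega
  -- the ideal of negative coefficients of the generators
  set S : Set R := ⋃ i : Fin r, (f i).coeff '' (Set.Icc (-(N0 : ℤ)) (-1)) with hSdef
  have hSfin : S.Finite := Set.finite_iUnion fun i => (Set.finite_Icc _ _).image _
  set I : Ideal R := Ideal.span S with hIdef
  have hInil : I ≤ (⊥ : Ideal R).radical := by
    rw [hIdef, Ideal.span_le]
    rintro x ⟨_, ⟨i, rfl⟩, ⟨n, hn, rfl⟩⟩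
    have : IsNilpotent ((f i).coeff n) := hf i n (by exact hn.2.trans_lt (by omega))
    exact mem_nilradical.2 this
  obtain ⟨d0, hd0⟩ : ∃ k : ℕ, I ^ k ≤ ⊥ :=
    Ideal.exists_pow_le_of_le_radical_of_fg hInil (Submodule.fg_span hSfin)
  set d : ℕ := d0 + 1 with hddef
  have hd : I ^ d ≤ ⊥ := le_trans (Ideal.pow_le_pow_right (by omega)) hd0
  -- the key invariant
  have key : ∀ g ∈ Algebra.adjoin ℂ (Set.range f), ∀ n : ℤ, g.coeff n ∈ I ^ (m n) := by
    intro g hg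
    induction hg using Algebra.adjoin_induction with
    | mem x hx =>
        obtain ⟨i, rfl⟩ := hx
        intro n
        rcases le_or_gt 0 n with hn | hn
        · rw [hmzero n hn, pow_zero, Ideal.one_eq_top]; exact Submodule.mem_top
        · rcases lt_or_ge n (-(N0 : ℤ)) with hn2 | hn2
          · rw [horder i n hn2]; exact zero_mem _
          · have hmem : (f i).coeff n ∈ I := by
              apply Ideal.subset_span
              exact Set.mem_iUnion.2 ⟨i, ⟨n, ⟨hn2, by omega⟩, rfl⟩⟩
            have h1 : m n ≤ 1 := by
              rw [hmle]; omega
            exact Ideal.pow_le_pow_right h1 (by simpa [pow_one] using hmem)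
    | algebraMap c =>
        intro n
        rcases le_or_gt 0 n with hn | hn
        · rw [hmzero n hn, pow_zero, Ideal.one_eq_top]; exact Submodule.mem_top
        · rw [HahnSeries.algebraMap_apply', HahnSeries.ofPowerSeries_apply,
            HahnSeries.embDomain_notin_range ?_]
          · exact zero_mem _
          · rintro ⟨k, hk⟩
            change ((k : ℤ)) = n at hk
            omega
    | add x y hx hy ihx ihy =>
        intro n
        rw [HahnSeries.coeff_add]
        exact add_mem (ihx n) (ihy n)
    | mul x y hx hy ihx ihy =>
        intro n
        rw [HahnSeries.coeff_mul]
        apply Ideal.sum_mem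
        rintro ⟨a, b⟩ hab
        obtain ⟨-, -, hab⟩ := Finset.mem_addAntidiagonal.1 hab
        have h1 : x.coeff a * y.coeff b ∈ I ^ (m a) * I ^ (m b) :=
          Ideal.mul_mem_mul (ihx a) (ihy b)
        rw [← pow_add] at h1
        exact Ideal.pow_le_pow_right (hab ▸ hsuper a b) h1
  refine ⟨N' * d, d, fun g hg => ⟨?_, ?_⟩⟩
  · intro n hn
    have h1 : g.coeff n ∈ I ^ (m n) := key g hg n
    have h2 : d ≤ m n := by
      by_contra h
      have h3 : m n ≤ d - 1 := by omega
      have h4 := (hmle n (d - 1)).1 h3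
      have h5 : (d - 1) * N' + N' = d * N' := by
        have : d - 1 + 1 = d := by omega
        calc (d - 1) * N' + N' = (d - 1 + 1) * N' := (Nat.succ_mul _ _).symm
          _ = d * N' := by rw [this]
      have h6 : d * N' = N' * d := Nat.mul_comm _ _
      omega
    have := hd (Ideal.pow_le_pow_right h2 h1)
    simpa using this
  · intro n hn
    have h1 : g.coeff n ∈ I ^ (m n) := key g hg n
    have h2 : 1 ≤ m n := by
      by_contra h
      have h3 := (hmle n 0).1 (by omega)
      omega
    have h4 : g.coeff n ∈ I := by
      simpa [pow_one] using Ideal.pow_le_pow_right h2 h1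
    have := hd (Ideal.pow_mem_pow h4 d)
    simpa using this
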